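/- Let f, f*: {1,...,n} → {1,...,n} be identical except that f(i) = 1 for i = 1,...,r (r ≥ 2), no element maps to 2 under f, and f*(r) = 2 (with f*(i) = f(i) for i ≠ r). Then D[f] ≤ D[f*], where D[h] denotes the number of permutations g with g(i) ≠ h(i) for all i. -/

import Mathlib

/-- Lemma (*): if f, f* agree except that f(i) = 1 for i = 1,...,r (r ≥ 2), no
element maps to 2 under f, and f*(r) = 2, then D[f] ≤ D[f*]. -/
theorem stmt_11 (n r : ℕ) (hn : 2 ≤ n) (hr : 2 ≤ r) (hrn : r ≤ n)
    (f fstar : Fin n → Fin n)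
    (hf1 : ∀ i : Fin n, i.val < r → f i = ⟨0, by omega⟩)
    (hf2 : ∀ i : Fin n, f i ≠ ⟨1, by omega⟩)
    (hstar1 : fstar ⟨r - 1, by omega⟩ = ⟨1, by omega⟩)
    (hstar2 : ∀ i : Fin n, i.val ≠ r - 1 → fstar i = f i) :
    (Finset.univ.filter fun g : Equiv.Perm (Fin n) => ∀ i, g i ≠ f i).card
      ≤ (Finset.univ.filter fun g : Equiv.Perm (Fin n) => ∀ i, g i ≠ fstar i).card := by
  classical
  have h0n : 0 < n := by omega
  have h1n : 1 < n := hn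
  have hpn : r - 1 < n := by omega
  set a0 : Fin n := ⟨0, h0n⟩ with ha0
  set a1 : Fin n := ⟨1, h1n⟩ with ha1
  set p : Fin n := ⟨r - 1, hpn⟩ with hp
  have ha01 : a0 ≠ a1 := by simp [ha0, ha1, Fin.ext_iff]
  have hfp : f p = a0 := hf1 p (by simp [hp]; omega)
  have hfsp : fstar p = a1 := hstar1
  have hfs : ∀ i : Fin n, i ≠ p → fstar i = f i := by
    intro i hi
    exact hstar2 i (fun h => hi (Fin.ext h))
  apply Finset.card_le_card_of_injOn
    (fun g => if g p = a1 then Equiv.swap a0 a1 * g else g)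
  · intro g hg
    simp only [Finset.mem_coe, Finset.mem_filter, Finset.mem_univ, true_and] at hg ⊢
    by_cases hcase : g p = a1
    · rw [if_pos hcase]
      intro i
      by_cases hip : i = p
      · subst hip
        rw [hfsp, Equiv.Perm.mul_apply, hcase, Equiv.swap_apply_right]
        exact ha01
      · rw [hfs i hip, Equiv.Perm.mul_apply]
        by_cases h0 : g i = a0
        · rw [h0, Equiv.swap_apply_left]
          exact fun h => hf2 i h.symm
        · have h1 : g i ≠ a1 := fun h => hip (g.injective (h.trans hcase.symm))
          rw [Equiv.swap_apply_of_ne_of_ne h0 h1]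
          exact hg i
    · rw [if_neg hcase]
      intro i
      by_cases hip : i = p
      · subst hip; rw [hfsp]; exact hcase
      · rw [hfs i hip]; exact hg i
  · intro g1 hg1 g2 hg2 heq
    simp only [Finset.coe_filter, Finset.mem_univ, true_and, Set.mem_setOf_eq] at hg1 hg2
    beta_reduce at heq
    by_cases h1 : g1 p = a1 <;> by_cases h2 : g2 p = a1
    · rw [if_pos h1, if_pos h2] at heq
      exact mul_left_cancel heq
    · rw [if_pos h1, if_neg h2] at heq
      exfalso
      have : g2 p = Equiv.swap a0 a1 (g1 p) := by rw [← heq]; rfl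
      rw [h1, Equiv.swap_apply_right] at this
      exact hg2 p (this.trans hfp.symm)
    · rw [if_neg h1, if_pos h2] at heq
      exfalso
      have : g1 p = Equiv.swap a0 a1 (g2 p) := by rw [heq]; rfl
      rw [h2, Equiv.swap_apply_right] at this
      exact hg1 p (this.trans hfp.symm)
    · rw [if_neg h1, if_neg h2] at heq
      exact heq
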